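/- Let m ≥ 1, let M ≥ 2 be an integer, let h₀ > 0 and 0 < h ≤ 1, and let g : {0,…,m−1} → ℝ satisfy |g(t)| ≤ h₀ hᵗ for all t. Set ε = π h₀ · (Σ_{t=0}^{m−1} hᵗ) · (m−1)/(2M), let β ∈ ℝ, and define f_r(θ) = Σ_{t=0}^{m−1} g(t) cos(tθ). Suppose that f_r(m'π/M) > β + ε for every integer m' ∈ {0,…,M}. Then for every θ ∈ ℝ, Re(Σ_{t=0}^{m−1} g(t) e^{−iθt}) > β. -/

import Mathlib

lemma abs_cos_sub_cos_le' (a b : ℝ) : |Real.cos a - Real.cos b| ≤ |a - b| := by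
  rw [Real.cos_sub_cos, abs_mul, abs_mul]
  have h1 : |Real.sin ((a + b) / 2)| ≤ 1 := Real.abs_sin_le_one _
  have h2 : |Real.sin ((a - b) / 2)| ≤ |(a - b) / 2| := Real.abs_sin_le_abs
  have h3 : |(-2 : ℝ)| = 2 := by norm_num
  rw [h3]
  have h4 : |(a - b) / 2| = |a - b| / 2 := by rw [abs_div]; norm_num
  nlinarith [abs_nonneg (Real.sin ((a + b) / 2)), abs_nonneg (Real.sin ((a - b) / 2)),
    abs_nonneg (a - b)]

/-- Theorem 3, Case B (frequency-domain content): sampled half-plane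
constraints on `f_r`, tightened by `ε`, together with the decay constraint,
force the entire Nyquist locus of the FIR filter into the half-plane
`Re z > β`. -/
theorem stmt15 (m M : ℕ) (hm : 1 ≤ m) (hM : 2 ≤ M) (h₀ h : ℝ)
    (hh₀ : 0 < h₀) (hh : 0 < h) (hh1 : h ≤ 1)
    (g : ℕ → ℝ) (hg : ∀ t < m, |g t| ≤ h₀ * h ^ t)
    (β : ℝ)
    (hsamp : ∀ m' : ℕ, m' ≤ M →
      β + Real.pi * h₀ * (∑ t ∈ Finset.range m, h ^ t) * ((m : ℝ) - 1) / (2 * M) <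
        ∑ t ∈ Finset.range m, g t * Real.cos (t * ((m' : ℝ) * Real.pi / M))) :
    ∀ θ : ℝ,
      β < (∑ t ∈ Finset.range m, (g t : ℂ) * Complex.exp (-(Complex.I * (θ * t)))).re := by
  intro θ
  have hπ : (0 : ℝ) < Real.pi := Real.pi_pos
  have hMpos : (0 : ℝ) < M := by
    have : 0 < M := lt_of_lt_of_le (by norm_num) hM
    exact_mod_cast this
  set S := ∑ t ∈ Finset.range m, h ^ t with hS
  set L := h₀ * S * ((m : ℝ) - 1) with hL
  have hSpos : 0 < S := Finset.sum_pos (fun t _ => pow_pos hh t) ⟨0, Finset.mem_range.mpr hm⟩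
  have hm1 : (1 : ℝ) ≤ m := by exact_mod_cast hm
  have hLnn : 0 ≤ L := by
    apply mul_nonneg (mul_nonneg hh₀.le hSpos.le); linarith
  set F : ℝ → ℝ := fun x => ∑ t ∈ Finset.range m, g t * Real.cos (t * x) with hF
  -- the real part equals F θ
  have hre : (∑ t ∈ Finset.range m, (g t : ℂ) * Complex.exp (-(Complex.I * (θ * t)))).re
      = F θ := by
    rw [Complex.re_sum]
    apply Finset.sum_congr rfl
    intro t _
    have h1 : -(Complex.I * ((θ : ℂ) * (t : ℂ))) = ((-(θ * t) : ℝ) : ℂ) * Complex.I := by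
      push_cast; ring
    rw [h1, Complex.re_ofReal_mul, Complex.exp_ofReal_mul_I_re, Real.cos_neg, mul_comm θ (t : ℝ)]
  rw [hre]
  -- Lipschitz bound for F
  have hlip : ∀ a b : ℝ, |F a - F b| ≤ L * |a - b| := by
    intro a b
    have hd : F a - F b = ∑ t ∈ Finset.range m, g t * (Real.cos (t * a) - Real.cos (t * b)) := by
      simp [hF, mul_sub, Finset.sum_sub_distrib]
    rw [hd]
    calc |∑ t ∈ Finset.range m, g t * (Real.cos (t * a) - Real.cos (t * b))|
        ≤ ∑ t ∈ Finset.range m, |g t * (Real.cos (t * a) - Real.cos (t * b))| :=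
          Finset.abs_sum_le_sum_abs _ _
      _ ≤ ∑ t ∈ Finset.range m, h₀ * h ^ t * (((m : ℝ) - 1) * |a - b|) := by
          apply Finset.sum_le_sum
          intro t ht
          rw [abs_mul]
          have htm : (t : ℝ) ≤ (m : ℝ) - 1 := by
            have h1 := Finset.mem_range.mp ht
            have h2 : (t : ℝ) + 1 ≤ (m : ℝ) := by exact_mod_cast h1
            linarith
          have hcc : |Real.cos (t * a) - Real.cos (t * b)| ≤ (t : ℝ) * |a - b| := by
            calc |Real.cos (t * a) - Real.cos (t * b)| ≤ |(t : ℝ) * a - (t : ℝ) * b| :=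
                abs_cos_sub_cos_le' _ _
              _ = (t : ℝ) * |a - b| := by
                rw [← mul_sub, abs_mul, abs_of_nonneg (by positivity : (0:ℝ) ≤ (t:ℝ))]
          calc |g t| * |Real.cos (t * a) - Real.cos (t * b)|
              ≤ (h₀ * h ^ t) * ((t : ℝ) * |a - b|) := by
                apply mul_le_mul (hg t (Finset.mem_range.mp ht)) hcc (abs_nonneg _)
                positivity
            _ ≤ h₀ * h ^ t * (((m : ℝ) - 1) * |a - b|) := by
                apply mul_le_mul_of_nonneg_left _ (by positivity)
                exact mul_le_mul_of_nonneg_right htm (abs_nonneg _)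
      _ = L * |a - b| := by
          rw [← Finset.sum_mul, ← Finset.mul_sum, hL, ← hS]; ring
  -- reduce θ into [0, π]
  set k : ℤ := round (θ / (2 * Real.pi)) with hk
  set θ' : ℝ := θ - 2 * Real.pi * k with hθ'
  have hθ'le : |θ'| ≤ Real.pi := by
    have h1 : |θ / (2 * Real.pi) - k| ≤ 1 / 2 := abs_sub_round _
    have h2 : θ' = (θ / (2 * Real.pi) - k) * (2 * Real.pi) := by
      field_simp [hθ']; exact hθ'
    rw [h2, abs_mul, abs_of_pos (by positivity : (0:ℝ) < 2 * Real.pi)]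
    nlinarith
  set φ : ℝ := |θ'| with hφ
  have hφ0 : 0 ≤ φ := abs_nonneg _
  have hFθφ : F θ = F φ := by
    apply Finset.sum_congr rfl
    intro t _
    congr 1
    have h2 : (t : ℝ) * θ = t * θ' + (t * k : ℤ) * (2 * Real.pi) := by push_cast [hθ']; ring
    rw [h2, Real.cos_add_int_mul_two_pi]
    rcases abs_cases θ' with ⟨h3, _⟩ | ⟨h3, _⟩
    · rw [hφ, h3]
    · rw [hφ, h3, mul_neg, Real.cos_neg]
  -- nearest sample point
  set x : ℝ := φ * M / Real.pi with hx
  have hx0 : 0 ≤ x := by positivity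
  have hxM : x ≤ M := by
    rw [hx, div_le_iff₀ hπ]
    calc φ * M ≤ Real.pi * M := mul_le_mul_of_nonneg_right hθ'le hMpos.le
      _ = (M : ℝ) * Real.pi := by ring
  have hround : round x = ⌊x + 1 / 2⌋ := round_eq x
  have hr0 : (0 : ℤ) ≤ round x := by
    rw [hround]; exact Int.floor_nonneg.mpr (by linarith)
  have hrM : round x ≤ (M : ℤ) := by
    rw [hround]
    have h5 : (⌊x + 1/2⌋ : ℝ) ≤ x + 1/2 := Int.floor_le _
    have h6 : (⌊x + 1/2⌋ : ℝ) < (M : ℝ) + 1 := by linarith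
    have h7 : (⌊x + 1/2⌋ : ℤ) < (M : ℤ) + 1 := by exact_mod_cast h6
    omega
  set m' : ℕ := (round x).toNat with hm'
  have hm'cast : (m' : ℝ) = round x := by
    rw [hm']; exact_mod_cast Int.toNat_of_nonneg hr0
  have hm'M : m' ≤ M := by omega
  have hxs : |x - m'| ≤ 1 / 2 := by rw [hm'cast]; exact abs_sub_round x
  set s : ℝ := (m' : ℝ) * Real.pi / M with hs
  have hφx : φ = x * Real.pi / M := by
    rw [hx]; field_simp
  have hφs : |φ - s| ≤ Real.pi / (2 * M) := by
    have h8 : φ - s = (x - m') * (Real.pi / M) := by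
      rw [hφx, hs]; field_simp
    rw [h8, abs_mul, abs_of_pos (by positivity : (0:ℝ) < Real.pi / M)]
    calc |x - m'| * (Real.pi / M) ≤ (1/2) * (Real.pi / M) :=
        mul_le_mul_of_nonneg_right hxs (by positivity)
      _ = Real.pi / (2 * M) := by ring
  have h5' : β + Real.pi * h₀ * S * ((m : ℝ) - 1) / (2 * M) < F s := hsamp m' hm'M
  have h4 := abs_le.mp (hlip φ s)
  have h6 : L * |φ - s| ≤ L * (Real.pi / (2 * M)) := mul_le_mul_of_nonneg_left hφs hLnn
  have hε : Real.pi * h₀ * S * ((m : ℝ) - 1) / (2 * M) = L * (Real.pi / (2 * M)) := by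
    rw [hL]; ring
  rw [hFθφ]
  linarith [h4.1]
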